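/- arXiv:2510.02514 — 3 statements merged into one kernel-verified Lean document; each statement's English description precedes it below -/
import Mathlib

section
/- Let q : ℝ^d → ℝ be a strictly positive, continuously differentiable probability density, and let v ∈ ℝ^d be such that ∇ log q(y + v) = ∇ log q(y) for every y ∈ ℝ^d. Then v = 0. -/
open MeasureTheory

/-- A probability density on ℝ^d: a nonnegative Lebesgue-measurable function integrating to 1. -/
def IsProbDensity (d : ℕ) (q : EuclideanSpace ℝ (Fin d) → ℝ) : Prop :=
  Measurable q ∧ (∀ x, 0 ≤ q x) ∧ ∫ x, q x = 1

/-- If a strictly positive C¹ probability density has a score (gradient of the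
log-density) that is invariant under translation by `v`, then `v = 0`. -/
theorem score_translation_invariant (d : ℕ) (q : EuclideanSpace ℝ (Fin d) → ℝ)
    (hq : IsProbDensity d q) (hpos : ∀ y, 0 < q y) (hC1 : ContDiff ℝ 1 q)
    (v : EuclideanSpace ℝ (Fin d))
    (h : ∀ y : EuclideanSpace ℝ (Fin d),
      gradient (fun z => Real.log (q z)) (y + v) = gradient (fun z => Real.log (q z)) y) :
    v = 0 := by
  obtain ⟨hmeas, hnn, hint⟩ := hq
  set L : EuclideanSpace ℝ (Fin d) → ℝ := fun z => Real.log (q z) with hLdef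
  by_contra hv
  have hqi : Integrable q := integrable_of_integral_eq_one hint
  have hL : Differentiable ℝ L := fun y =>
    (Real.differentiableAt_log (hpos y).ne').comp y ((hC1.differentiable one_ne_zero) y)
  -- from gradient equality to fderiv equality
  have hfd : ∀ y : EuclideanSpace ℝ (Fin d), fderiv ℝ L (y + v) = fderiv ℝ L y := by
    intro y
    have := congrArg (InnerProductSpace.toDual ℝ (EuclideanSpace ℝ (Fin d))) (h y)
    simpa [gradient] using this
  -- the shifted function
  have hshift : ∀ y : EuclideanSpace ℝ (Fin d), HasFDerivAt (fun x => L (x + v)) (fderiv ℝ L (y + v)) y := by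
    intro y
    have := ((hL (y + v)).hasFDerivAt).comp y ((hasFDerivAt_id y).add_const v)
    exact this
  have hg : Differentiable ℝ (fun y : EuclideanSpace ℝ (Fin d) => L (y + v) - L y) := by
    intro y
    exact ((hshift y).differentiableAt).sub (hL y)
  have hg' : ∀ y : EuclideanSpace ℝ (Fin d), fderiv ℝ (fun y : EuclideanSpace ℝ (Fin d) => L (y + v) - L y) y = 0 := by
    intro y
    rw [fderiv_fun_sub ((hshift y).differentiableAt) (hL y), (hshift y).fderiv, hfd y,
      sub_self]
  have hconst : ∀ y : EuclideanSpace ℝ (Fin d), L (y + v) - L y = L (0 + v) - L 0 :=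
    fun y => is_const_of_fderiv_eq_zero hg hg' y 0
  set c : ℝ := L (0 + v) - L 0 with hc
  have hqv : ∀ y : EuclideanSpace ℝ (Fin d), q (y + v) = Real.exp c * q y := by
    intro y
    have h1 : L (y + v) = c + L y := by have := hconst y; linarith
    have h2 : q (y + v) = Real.exp (L (y + v)) := (Real.exp_log (hpos _)).symm
    rw [h2, h1, Real.exp_add, Real.exp_log (hpos y)]
  -- integrate to get c = 0
  have hshiftint : ∫ y : EuclideanSpace ℝ (Fin d), q (y + v) = 1 := by
    rw [integral_add_right_eq_self q v]; exact hint
  have hec : Real.exp c = 1 := by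
    have h3 : ∫ y : EuclideanSpace ℝ (Fin d), q (y + v) = Real.exp c * ∫ y, q y := by
      simp_rw [hqv]; exact integral_const_mul _ _
    rw [hshiftint, hint, mul_one] at h3
    linarith
  have hper : ∀ y : EuclideanSpace ℝ (Fin d), q (y + v) = q y := by
    intro y; rw [hqv y, hec, one_mul]
  -- periodicity for all natural multiples
  have hpern : ∀ (n : ℕ) (y : EuclideanSpace ℝ (Fin d)), q (y + n • v) = q y := by
    intro n
    induction n with
    | zero => simp
    | succ n ih =>
      intro y
      have heq : y + (n + 1) • v = (y + n • v) + v := by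
        rw [succ_nsmul]; abel
      rw [heq, hper, ih]
  -- disjoint balls
  set r : ℝ := ‖v‖ / 3 with hr
  have hvn : (0 : ℝ) < ‖v‖ := norm_pos_iff.mpr hv
  have hrpos : 0 < r := by positivity
  set s : ℕ → Set (EuclideanSpace ℝ (Fin d)) := fun n => Metric.closedBall ((n : ℕ) • v) r with hs
  have hsm : ∀ n, MeasurableSet (s n) := fun n => measurableSet_closedBall
  have hdisj : Pairwise (Function.onFun Disjoint s) := by
    intro m n hmn
    apply Metric.closedBall_disjoint_closedBall
    have hdist : dist ((m : ℕ) • v) ((n : ℕ) • v) = |(m : ℝ) - (n : ℝ)| * ‖v‖ := by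
      rw [dist_eq_norm, ← Nat.cast_smul_eq_nsmul ℝ m v, ← Nat.cast_smul_eq_nsmul ℝ n v,
        ← sub_smul, norm_smul, Real.norm_eq_abs]
    have h1 : (1 : ℝ) ≤ |(m : ℝ) - (n : ℝ)| := by
      have hne : (m : ℤ) ≠ (n : ℤ) := by exact_mod_cast hmn
      have h2 : (1 : ℤ) ≤ |(m : ℤ) - (n : ℤ)| := Int.one_le_abs (sub_ne_zero.mpr hne)
      exact_mod_cast h2
    rw [hdist]
    nlinarith
  -- each ball carries the same positive mass
  set m0 : ℝ := ∫ x in s 0, q x with hm0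
  have hm0pos : 0 < m0 := by
    rw [hm0]
    rw [setIntegral_pos_iff_support_of_nonneg_ae
        (Filter.Eventually.of_forall fun x => hnn x) hqi.integrableOn]
    have hsupp : Function.support q = Set.univ := by
      ext x; simp [Function.support, (hpos x).ne']
    rw [hsupp, Set.univ_inter]
    exact Metric.measure_closedBall_pos volume _ hrpos
  have hsame : ∀ n : ℕ, ∫ x in s n, q x = m0 := by
    intro n
    have hmp : MeasurePreserving (fun x : EuclideanSpace ℝ (Fin d) => x + (n : ℕ) • v) volume volume :=
      measurePreserving_add_right volume _
    have hemb : MeasurableEmbedding (fun x : EuclideanSpace ℝ (Fin d) => x + (n : ℕ) • v) :=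
      (MeasurableEquiv.addRight ((n : ℕ) • v)).measurableEmbedding
    have hpre : (fun x : EuclideanSpace ℝ (Fin d) => x + (n : ℕ) • v) ⁻¹' (s n) = s 0 := by
      ext x
      simp only [hs, Set.mem_preimage, Metric.mem_closedBall, dist_eq_norm, zero_smul]
      constructor
      · intro hx; simpa using hx
      · intro hx; simpa using hx
    have := hmp.setIntegral_preimage_emb hemb q (s n)
    rw [hpre] at this
    rw [← this]
    exact setIntegral_congr_fun (hsm 0) fun x _ => hpern n x
  -- summing up: N * m0 ≤ 1 for all N, contradiction
  obtain ⟨N, hN⟩ := exists_nat_gt (1 / m0)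
  have hsum : ∑ n ∈ Finset.range N, ∫ x in s n, q x = ∫ x in ⋃ n ∈ Finset.range N, s n, q x :=
    (integral_biUnion_finset (Finset.range N) (fun n _ => hsm n)
      (fun i _ j _ hij => hdisj hij) fun n _ => hqi.integrableOn).symm
  have hle : ∫ x in ⋃ n ∈ Finset.range N, s n, q x ≤ 1 := by
    rw [← hint]
    exact setIntegral_le_integral hqi (Filter.Eventually.of_forall fun x => hnn x)
  have hNm : (N : ℝ) * m0 ≤ 1 := by
    have h4 : ∑ n ∈ Finset.range N, ∫ x in s n, q x = N * m0 := by
      simp [hsame]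
    rw [← h4, hsum]; exact hle
  have : 1 / m0 < N := hN
  have : 1 < N * m0 := by
    rw [div_lt_iff₀ hm0pos] at hN
    linarith
  linarith
end

section
/- Let Σ be a symmetric positive-semidefinite d×d real matrix and Δ ∈ ℝ^d. If Δ lies in the range of Σ, then ∫₀^∞ Δᵀ (γΣ + I)^{−2} Δ dγ = Δᵀ Σ† Δ, where Σ† is the Moore–Penrose pseudoinverse of Σ; if Δ does not lie in the range of Σ, then ∫₀^∞ Δᵀ (γΣ + I)^{−2} Δ dγ = +∞. -/
open MeasureTheory Matrix
open scoped ENNReal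

private lemma aux_meas (a c : ℝ) :
    Measurable (fun γ : ℝ => ENNReal.ofReal (((γ * a + 1)^2)⁻¹ * c^2)) := by
  apply ENNReal.measurable_ofReal.comp
  exact ((((measurable_id.mul_const a).add_const 1).pow_const 2).inv).mul_const _

private lemma aux_lint_pos (a c : ℝ) (ha : 0 < a) :
    ∫⁻ γ in Set.Ioi (0:ℝ), ENNReal.ofReal (((γ * a + 1)^2)⁻¹ * c^2)
      = ENNReal.ofReal (c^2 / a) := by
  have h0 : ∀ x : ℝ, x ∈ Set.Ici (0:ℝ) → (0:ℝ) < x * a + 1 := fun x hx => by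
    have : (0:ℝ) ≤ x := hx
    nlinarith
  have hderiv : ∀ x ∈ Set.Ici (0:ℝ),
      HasDerivAt (fun γ : ℝ => -(c^2/a) * (γ * a + 1)⁻¹) (((x * a + 1)^2)⁻¹ * c^2) x := by
    intro x hx
    have h1 : HasDerivAt (fun γ : ℝ => γ * a + 1) a x := by
      simpa using ((hasDerivAt_id x).mul_const a).add_const 1
    have h2 := (h1.inv (ne_of_gt (h0 x hx))).const_mul (-(c^2/a))
    refine h2.congr_deriv ?_
    have := ne_of_gt (h0 x hx)
    field_simp
  have hpos : ∀ x ∈ Set.Ioi (0:ℝ), (0:ℝ) ≤ ((x * a + 1)^2)⁻¹ * c^2 := fun x _ => by positivity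
  have htend : Filter.Tendsto (fun γ : ℝ => -(c^2/a) * (γ * a + 1)⁻¹) Filter.atTop (nhds 0) := by
    have h3 : Filter.Tendsto (fun γ : ℝ => γ * a + 1) Filter.atTop Filter.atTop :=
      Filter.tendsto_atTop_add_const_right _ 1 (Filter.Tendsto.atTop_mul_const ha Filter.tendsto_id)
    simpa using (h3.inv_tendsto_atTop).const_mul (-(c^2/a))
  have hint : IntegrableOn (fun γ : ℝ => ((γ * a + 1)^2)⁻¹ * c^2) (Set.Ioi 0) :=
    integrableOn_Ioi_deriv_of_nonneg' hderiv hpos htend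
  have key := integral_Ioi_of_hasDerivAt_of_nonneg' hderiv hpos htend
  rw [← ofReal_integral_eq_lintegral_ofReal hint
    (Filter.Eventually.of_forall fun x => by positivity), key]
  norm_num

private lemma aux_lint_zero (c : ℝ) (hc : c ≠ 0) :
    ∫⁻ γ in Set.Ioi (0:ℝ), ENNReal.ofReal (((γ * (0:ℝ) + 1)^2)⁻¹ * c^2) = ⊤ := by
  simp only [mul_zero, zero_add, one_pow, inv_one, one_mul]
  rw [lintegral_const, Measure.restrict_apply_univ, Real.volume_Ioi]
  rw [ENNReal.mul_top]
  simp only [ne_eq, ENNReal.ofReal_eq_zero, not_le]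
  positivity

private lemma aux_conj_mul {d : ℕ} (U : Matrix (Fin d) (Fin d) ℝ) (hU2 : star U * U = 1)
    (w₁ w₂ : Fin d → ℝ) :
    (U * diagonal w₁ * star U) * (U * diagonal w₂ * star U)
      = U * diagonal (fun i => w₁ i * w₂ i) * star U := by
  have : (U * diagonal w₁ * star U) * (U * diagonal w₂ * star U)
      = U * (diagonal w₁ * (star U * U) * diagonal w₂) * star U := by
    simp only [Matrix.mul_assoc]
  rw [this, hU2, Matrix.mul_one, diagonal_mul_diagonal]

private lemma aux_quad {d : ℕ} (U : Matrix (Fin d) (Fin d) ℝ) (w : Fin d → ℝ) (Δ : Fin d → ℝ) :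
    Δ ⬝ᵥ ((U * diagonal w * star U) *ᵥ Δ) = ∑ i, w i * ((star U *ᵥ Δ) i)^2 := by
  have hstar : star U = Uᵀ := by
    rw [Matrix.star_eq_conjTranspose, conjTranspose_eq_transpose_of_trivial]
  rw [← Matrix.mulVec_mulVec, ← Matrix.mulVec_mulVec, dotProduct_mulVec, hstar,
    ← Matrix.mulVec_transpose]
  simp only [dotProduct, Matrix.mulVec_diagonal]
  exact Finset.sum_congr rfl fun i _ => by ring

private lemma aux_inv_sq {d : ℕ} (S U : Matrix (Fin d) (Fin d) ℝ) (lam : Fin d → ℝ)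
    (hU1 : U * star U = 1) (hU2 : star U * U = 1)
    (hspec : S = U * diagonal lam * star U) (γ : ℝ) (hne : ∀ i, γ * lam i + 1 ≠ 0) :
    (γ • S + 1)⁻¹ ^ 2 = U * diagonal (fun i => ((γ * lam i + 1)^2)⁻¹) * star U := by
  have key : γ • S + 1 = U * diagonal (fun i => γ * lam i + 1) * star U := by
    rw [hspec]
    have h1 : γ • (U * diagonal lam * star U) = U * diagonal (fun i => γ * lam i) * star U := by
      rw [← Matrix.smul_mul, ← Matrix.mul_smul, ← diagonal_smul]
      congr 1
    have h2 : (1 : Matrix (Fin d) (Fin d) ℝ) = U * diagonal (fun _ => (1:ℝ)) * star U := by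
      rw [diagonal_one, Matrix.mul_one, hU1]
    rw [h1]
    nth_rewrite 1 [h2]
    rw [← Matrix.add_mul, ← Matrix.mul_add, diagonal_add]
  have hinv : (γ • S + 1)⁻¹ = U * diagonal (fun i => (γ * lam i + 1)⁻¹) * star U := by
    apply inv_eq_right_inv
    rw [key, aux_conj_mul U hU2]
    have : (fun i => (γ * lam i + 1) * (γ * lam i + 1)⁻¹) = fun _ => (1:ℝ) := by
      funext i; exact mul_inv_cancel₀ (hne i)
    rw [this, diagonal_one, Matrix.mul_one, hU1]
  rw [sq, hinv, aux_conj_mul U hU2]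
  have h3 : (fun i => (γ * lam i + 1)⁻¹ * (γ * lam i + 1)⁻¹)
      = fun i => ((γ * lam i + 1)^2)⁻¹ := by
    funext i; rw [← mul_inv, ← sq]
  rw [h3]

/-- For a symmetric positive-semidefinite matrix `Σ` with Moore–Penrose
pseudoinverse `P = Σ†` (characterized by the four Penrose conditions), and any vector `Δ`:
if `Δ` lies in the range of `Σ` then `∫₀^∞ Δᵀ (γΣ + I)⁻² Δ dγ = Δᵀ Σ† Δ`, and otherwise the
integral diverges to `+∞`. -/
theorem integral_inv_sq_quadform_psd (d : ℕ) (S : Matrix (Fin d) (Fin d) ℝ)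
    (hS : S.PosSemidef) (P : Matrix (Fin d) (Fin d) ℝ)
    (hP1 : S * P * S = S) (hP2 : P * S * P = P)
    (hP3 : (S * P)ᵀ = S * P) (hP4 : (P * S)ᵀ = P * S)
    (Δ : Fin d → ℝ) :
    ((∃ u, S.mulVec u = Δ) →
      ∫⁻ γ in Set.Ioi (0 : ℝ),
          ENNReal.ofReal (Δ ⬝ᵥ (((γ • S + 1)⁻¹ ^ 2).mulVec Δ))
        = ENNReal.ofReal (Δ ⬝ᵥ (P.mulVec Δ))) ∧
    (¬(∃ u, S.mulVec u = Δ) →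
      ∫⁻ γ in Set.Ioi (0 : ℝ),
          ENNReal.ofReal (Δ ⬝ᵥ (((γ • S + 1)⁻¹ ^ 2).mulVec Δ)) = ⊤) := by
  classical
  set U : Matrix (Fin d) (Fin d) ℝ := (hS.1.eigenvectorUnitary : Matrix (Fin d) (Fin d) ℝ)
    with hUdef
  set lam : Fin d → ℝ := hS.1.eigenvalues with hlamdef
  have hU1 : U * star U = 1 := (Matrix.mem_unitaryGroup_iff).mp (hS.1.eigenvectorUnitary).2
  have hU2 : star U * U = 1 := (Matrix.mem_unitaryGroup_iff').mp (hS.1.eigenvectorUnitary).2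
  have hspec : S = U * diagonal lam * star U := by
    have h := hS.1.spectral_theorem
    rwa [RCLike.ofReal_real_eq_id, Function.id_comp] at h
  have hlam : ∀ i, 0 ≤ lam i := fun i => hS.eigenvalues_nonneg i
  set c : Fin d → ℝ := star U *ᵥ Δ with hcdef
  have hne : ∀ γ ∈ Set.Ioi (0:ℝ), ∀ i, γ * lam i + 1 ≠ 0 := by
    intro γ hγ i
    have hγ' : (0:ℝ) < γ := hγ
    have := hlam i
    nlinarith
  have hmain : ∫⁻ γ in Set.Ioi (0:ℝ),
        ENNReal.ofReal (Δ ⬝ᵥ (((γ • S + 1)⁻¹ ^ 2) *ᵥ Δ))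
      = ∑ i, ∫⁻ γ in Set.Ioi (0:ℝ),
          ENNReal.ofReal (((γ * lam i + 1)^2)⁻¹ * (c i)^2) := by
    rw [setLIntegral_congr_fun measurableSet_Ioi (fun γ hγ => ?_), lintegral_finset_sum _ (fun i _ => aux_meas (lam i) (c i))]
    rw [aux_inv_sq S U lam hU1 hU2 hspec γ (hne γ hγ), aux_quad U _ Δ,
      ENNReal.ofReal_sum_of_nonneg (fun i _ => by positivity)]
  constructor
  · rintro ⟨u, hu⟩
    set b : Fin d → ℝ := star U *ᵥ u with hbdef
    have hcb : c = fun i => lam i * b i := by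
      have hUS : star U * S = diagonal lam * star U := by
        rw [hspec, ← Matrix.mul_assoc, ← Matrix.mul_assoc, hU2, Matrix.one_mul]
      rw [hcdef, ← hu, Matrix.mulVec_mulVec, hUS, ← Matrix.mulVec_mulVec]
      funext i
      exact Matrix.mulVec_diagonal _ _ _
    have hterm : ∀ i, ∫⁻ γ in Set.Ioi (0:ℝ),
        ENNReal.ofReal (((γ * lam i + 1)^2)⁻¹ * (c i)^2)
          = ENNReal.ofReal (lam i * (b i)^2) := by
      intro i
      rcases (hlam i).eq_or_lt with h|h
      · have hci : c i = 0 := by rw [hcb]; simp [← h]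
        simp [hci, ← h]
      · rw [aux_lint_pos (lam i) (c i) h]
        congr 1
        rw [hcb]
        field_simp
    have hPq : Δ ⬝ᵥ P *ᵥ Δ = ∑ i, lam i * (b i)^2 := by
      have hST : Sᵀ = S := by
        rw [← conjTranspose_eq_transpose_of_trivial]
        exact hS.1
      have h1 : Δ ⬝ᵥ P *ᵥ Δ = u ⬝ᵥ S *ᵥ u := by
        conv_lhs => rw [← hu]
        have h2 : S *ᵥ u = u ᵥ* S := by rw [← hST, Matrix.mulVec_transpose, hST]
        nth_rewrite 1 [h2]
        rw [← dotProduct_mulVec, Matrix.mulVec_mulVec, Matrix.mulVec_mulVec, hP1]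
      rw [h1]
      nth_rewrite 1 [hspec]
      exact aux_quad U lam u
    rw [hmain, hPq]
    rw [Finset.sum_congr rfl (fun i _ => hterm i)]
    rw [← ENNReal.ofReal_sum_of_nonneg (fun i _ => mul_nonneg (hlam i) (sq_nonneg _))]
  · intro hnot
    have hex : ∃ i, lam i = 0 ∧ c i ≠ 0 := by
      by_contra h
      push_neg at h
      apply hnot
      refine ⟨U *ᵥ (fun i => if lam i = 0 then 0 else c i / lam i), ?_⟩
      have hDv : diagonal lam *ᵥ (fun i => if lam i = 0 then 0 else c i / lam i) = c := by
        funext i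
        rw [Matrix.mulVec_diagonal]
        by_cases hi : lam i = 0
        · rw [if_pos hi, mul_zero, h i hi]
        · rw [if_neg hi, mul_comm, div_mul_cancel₀ _ hi]
      rw [Matrix.mulVec_mulVec, hspec]
      have : (U * diagonal lam * star U) * U = U * diagonal lam := by
        rw [Matrix.mul_assoc, hU2, Matrix.mul_one]
      rw [this, ← Matrix.mulVec_mulVec, hDv, hcdef, Matrix.mulVec_mulVec, hU1,
        Matrix.one_mulVec]
    obtain ⟨i0, hl0, hc0⟩ := hex
    rw [hmain]
    rw [ENNReal.sum_eq_top]
    refine ⟨i0, Finset.mem_univ _, ?_⟩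
    rw [hl0]
    exact aux_lint_zero (c i0) hc0
end

section
/- (Invariance of the conditional expectation under sufficient statistics.) Let (Ω, F, ℙ) be a probability space, let X : Ω → ℝ be integrable, let Y : Ω → E and T : E → E′ be measurable maps into measurable spaces E and E′. Suppose that the σ-algebra generated by X and the σ-algebra generated by Y are conditionally independent given the σ-algebra generated by T ∘ Y (i.e., Y ↔ T(Y) ↔ X is a Markov chain). Then E[X | σ(Y)] = E[X | σ(T ∘ Y)] almost surely. -/
open MeasureTheory Filter

private lemma integrable_of_bdd' {Ω : Type*} {m0 : MeasurableSpace Ω} {μ : Measure Ω}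
    [IsFiniteMeasure μ] {f : Ω → ℝ} (hf : AEStronglyMeasurable f μ) {C : ℝ}
    (hC : ∀ ω, |f ω| ≤ C) : Integrable f μ :=
  Integrable.mono' (integrable_const C) hf (Eventually.of_forall fun ω => by
    simpa [Real.norm_eq_abs] using hC ω)

private lemma integral_mul_condexp_aux {Ω : Type*} {m0 : MeasurableSpace Ω} (μ : Measure Ω)
    [IsProbabilityMeasure μ] {m : MeasurableSpace Ω} (hm : m ≤ m0)
    {c W : Ω → ℝ} (hc : StronglyMeasurable[m] c) (hW : Integrable W μ)
    (hcW : Integrable (fun ω => c ω * W ω) μ) :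
    ∫ ω, c ω * W ω ∂μ = ∫ ω, c ω * (μ[W|m]) ω ∂μ := by
  have h1 : Integrable (c * W) μ := hcW
  have h := condExp_mul_of_stronglyMeasurable_left (μ := μ) hc h1 hW
  calc ∫ ω, c ω * W ω ∂μ = ∫ ω, (μ[c * W|m]) ω ∂μ := (integral_condExp hm).symm
    _ = ∫ ω, (c * (μ[W|m])) ω ∂μ := integral_congr_ae h
    _ = ∫ ω, c ω * (μ[W|m]) ω ∂μ := rfl


private lemma setIntegral_mul_indicator_aux {Ω E : Type*} {m0 : MeasurableSpace Ω}
    [MeasurableSpace E] (μ : Measure Ω) (W : Ω → ℝ) (Y : Ω → E) {B : Set E}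
    (hB : MeasurableSet B) (hYm : Measurable Y) :
    ∫ ω in Y ⁻¹' B, W ω ∂μ = ∫ ω, W ω * B.indicator (fun _ => (1 : ℝ)) (Y ω) ∂μ := by
  rw [← integral_indicator (hYm hB)]
  refine integral_congr_ae (Filter.Eventually.of_forall fun ω => ?_)
  by_cases h : Y ω ∈ B <;> simp [Set.indicator_apply, Set.mem_preimage, h]

private lemma integrableOn_aux {Ω : Type*} {m0 : MeasurableSpace Ω} {μ : Measure Ω}
    {f : Ω → ℝ} (hf : Integrable f μ) (s : Set Ω) : IntegrableOn f s μ :=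
  hf.integrableOn

set_option maxHeartbeats 2000000 in
/-- **invariance of the conditional expectation under sufficient statistics.**
If `σ(X)` and `σ(Y)` are conditionally independent given `σ(T ∘ Y)` (expressed via bounded
measurable test functions, i.e. `Y ↔ T(Y) ↔ X` is a Markov chain), then
`E[X | σ(Y)] = E[X | σ(T ∘ Y)]` almost surely. -/
theorem condexp_sufficient_statistic
    {Ω E E' : Type*} [MeasurableSpace Ω] [MeasurableSpace E] [MeasurableSpace E']
    (μ : Measure Ω) [IsProbabilityMeasure μ]
    (X : Ω → ℝ) (hX : Integrable X μ) (hXmeas : Measurable X)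
    (Y : Ω → E) (hY : Measurable Y)
    (T : E → E') (hT : Measurable T)
    (hCI : ∀ (f : ℝ → ℝ) (g : E → ℝ), Measurable f → Measurable g →
      (∃ C, ∀ t, |f t| ≤ C) → (∃ C, ∀ t, |g t| ≤ C) →
      MeasureTheory.condExp (MeasurableSpace.comap (T ∘ Y) inferInstance) μ
          (fun ω => f (X ω) * g (Y ω))
        =ᵐ[μ] fun ω =>
          MeasureTheory.condExp (MeasurableSpace.comap (T ∘ Y) inferInstance) μ
              (fun ω' => f (X ω')) ω *
          MeasureTheory.condExp (MeasurableSpace.comap (T ∘ Y) inferInstance) μ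
              (fun ω' => g (Y ω')) ω) :
    MeasureTheory.condExp (MeasurableSpace.comap Y inferInstance) μ X
      =ᵐ[μ] MeasureTheory.condExp (MeasurableSpace.comap (T ∘ Y) inferInstance) μ X := by
  rename_i mΩ mE mE' hPr
  set mG := MeasurableSpace.comap (T ∘ Y) inferInstance with hmGdef
  set mY := MeasurableSpace.comap Y inferInstance with hmYdef
  have hGle : mG ≤ mΩ := (hT.comp hY).comap_le
  have hYle : mY ≤ mΩ := hY.comap_le
  haveI : IsFiniteMeasure (μ.trim hGle) := isFiniteMeasure_trim hGle
  haveI : IsFiniteMeasure (μ.trim hYle) := isFiniteMeasure_trim hYle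
  have hGY : mG ≤ mY := by
    rw [hmGdef, hmYdef, ← MeasurableSpace.comap_comp]
    exact MeasurableSpace.comap_mono hT.comap_le
  -- truncations
  set fN : ℕ → ℝ → ℝ := fun n t => max (min t n) (-(n : ℝ)) with hfNdef
  have hfN_meas : ∀ n, Measurable (fN n) :=
    fun n => (measurable_id.min measurable_const).max measurable_const
  have hfN_bdd : ∀ (n : ℕ) (t : ℝ), |fN n t| ≤ (n : ℝ) := by
    intro n t
    have hn : (0 : ℝ) ≤ n := Nat.cast_nonneg n
    rw [abs_le]
    exact ⟨le_max_right _ _, max_le ((min_le_right _ _)) (by linarith)⟩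
  have hfN_le : ∀ (n : ℕ) (t : ℝ), |fN n t| ≤ |t| := by
    intro n t
    have hn : (0 : ℝ) ≤ n := Nat.cast_nonneg n
    rcases le_or_gt 0 t with h | h
    · rw [abs_of_nonneg h, abs_le]
      exact ⟨le_max_of_le_left (le_min (by linarith) (by linarith)),
        max_le (min_le_left _ _) (by linarith)⟩
    · rw [abs_of_neg h, abs_le, hfNdef]
      simp only [min_eq_left (by linarith : t ≤ (n : ℝ))]
      exact ⟨by rw [neg_neg]; exact le_max_left _ _,
        max_le (by linarith) (by linarith)⟩
  have hfN_tendsto : ∀ t : ℝ, Tendsto (fun n => fN n t) atTop (nhds t) := by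
    intro t
    refine tendsto_const_nhds.congr' ?_
    filter_upwards [eventually_ge_atTop ⌈|t|⌉₊] with n hn
    have h : |t| ≤ (n : ℝ) := le_trans (Nat.le_ceil _) (Nat.cast_le.mpr hn)
    rw [abs_le] at h
    simp [hfNdef, min_eq_left h.2, max_eq_left (by linarith [h.1] : -(n : ℝ) ≤ t)]
  -- key integral identity
  have key : ∀ (g : E → ℝ), Measurable g → (∀ t, |g t| ≤ 1) →
      ∫ ω, X ω * g (Y ω) ∂μ = ∫ ω, (μ[X|mG]) ω * g (Y ω) ∂μ := by
    intro g hg hg1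
    set c := μ[fun ω => g (Y ω)|mG] with hcdef
    have hc_meas : StronglyMeasurable[mG] c := stronglyMeasurable_condExp
    have hc_asm : AEStronglyMeasurable[mΩ] c μ := (hc_meas.mono hGle).aestronglyMeasurable
    have hc_bdd : ∀ᵐ ω ∂μ, |c ω| ≤ 1 := by
      have := ae_bdd_condExp_of_ae_bdd (m := mG) (μ := μ) (R := 1)
        (f := fun ω => g (Y ω)) (Eventually.of_forall fun ω => by simpa using hg1 (Y ω))
      simpa using this
    have hgY_int : Integrable (fun ω => g (Y ω)) μ :=
      integrable_of_bdd' ((hg.comp hY).aestronglyMeasurable) (fun ω => hg1 (Y ω))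
    have hc_int : Integrable c μ := integrable_condExp
    -- step 1 : for each n, ∫ fN n (X)·g(Y) = ∫ fN n (X)·c
    have step1 : ∀ n, ∫ ω, fN n (X ω) * g (Y ω) ∂μ = ∫ ω, fN n (X ω) * c ω ∂μ := by
      intro n
      have hfnX_int : Integrable (fun ω => fN n (X ω)) μ :=
        integrable_of_bdd' (((hfN_meas n).comp hXmeas).aestronglyMeasurable)
          (fun ω => hfN_bdd n (X ω))
      have hprod_int : Integrable (fun ω => fN n (X ω) * g (Y ω)) μ :=
        integrable_of_bdd' ((((hfN_meas n).comp hXmeas).mul (hg.comp hY)).aestronglyMeasurable)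
          (fun ω => by
            calc |fN n (X ω) * g (Y ω)| = |fN n (X ω)| * |g (Y ω)| := abs_mul _ _
              _ ≤ (n : ℝ) * 1 := mul_le_mul (hfN_bdd n (X ω)) (hg1 (Y ω))
                  (abs_nonneg _) (Nat.cast_nonneg n)
              _ = (n : ℝ) := mul_one _)
      have hCI' := hCI (fN n) g (hfN_meas n) hg ⟨n, hfN_bdd n⟩ ⟨1, hg1⟩
      have e1 : ∫ ω, fN n (X ω) * g (Y ω) ∂μ
          = ∫ ω, (μ[fun ω' => fN n (X ω')|mG]) ω * c ω ∂μ := by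
        calc ∫ ω, fN n (X ω) * g (Y ω) ∂μ
            = ∫ ω, (μ[fun ω => fN n (X ω) * g (Y ω)|mG]) ω ∂μ := (integral_condExp hGle).symm
          _ = ∫ ω, (μ[fun ω' => fN n (X ω')|mG]) ω * c ω ∂μ := integral_congr_ae hCI'
      have hcfnX_int : Integrable (fun ω => c ω * fN n (X ω)) μ :=
        (hc_int.bdd_mul (c := n) (((hfN_meas n).comp hXmeas).aestronglyMeasurable)
          (Eventually.of_forall fun ω => by simpa [Real.norm_eq_abs] using hfN_bdd n (X ω))).congr
          (Eventually.of_forall fun ω => mul_comm _ _)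
      have e2 : ∫ ω, c ω * fN n (X ω) ∂μ
          = ∫ ω, c ω * (μ[fun ω' => fN n (X ω')|mG]) ω ∂μ :=
        integral_mul_condexp_aux μ hGle hc_meas hfnX_int hcfnX_int
      calc ∫ ω, fN n (X ω) * g (Y ω) ∂μ
          = ∫ ω, (μ[fun ω' => fN n (X ω')|mG]) ω * c ω ∂μ := e1
        _ = ∫ ω, c ω * (μ[fun ω' => fN n (X ω')|mG]) ω ∂μ := by
            simp_rw [mul_comm]
        _ = ∫ ω, c ω * fN n (X ω) ∂μ := e2.symm
        _ = ∫ ω, fN n (X ω) * c ω ∂μ := by simp_rw [mul_comm]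
    -- step 2 : pass to the limit
    have tendL : Tendsto (fun n => ∫ ω, fN n (X ω) * g (Y ω) ∂μ) atTop
        (nhds (∫ ω, X ω * g (Y ω) ∂μ)) := by
      refine tendsto_integral_of_dominated_convergence (fun ω => |X ω|)
        (fun n => (((hfN_meas n).comp hXmeas).mul (hg.comp hY)).aestronglyMeasurable)
        hX.abs (fun n => Eventually.of_forall fun ω => ?_)
        (Eventually.of_forall fun ω => ?_)
      · rw [Real.norm_eq_abs, abs_mul]
        calc |fN n (X ω)| * |g (Y ω)| ≤ |X ω| * 1 :=
            mul_le_mul (hfN_le n (X ω)) (hg1 (Y ω)) (abs_nonneg _) (abs_nonneg _)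
          _ = |X ω| := mul_one _
      · exact (hfN_tendsto (X ω)).mul tendsto_const_nhds
    have tendR : Tendsto (fun n => ∫ ω, fN n (X ω) * c ω ∂μ) atTop
        (nhds (∫ ω, X ω * c ω ∂μ)) := by
      refine tendsto_integral_of_dominated_convergence (fun ω => |X ω|)
        (fun n => (((hfN_meas n).comp hXmeas).aestronglyMeasurable).mul hc_asm)
        hX.abs (fun n => ?_) (Eventually.of_forall fun ω => ?_)
      · filter_upwards [hc_bdd] with ω hcb
        rw [Real.norm_eq_abs, abs_mul]
        calc |fN n (X ω)| * |c ω| ≤ |X ω| * 1 :=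
            mul_le_mul (hfN_le n (X ω)) hcb (abs_nonneg _) (abs_nonneg _)
          _ = |X ω| := mul_one _
      · exact (hfN_tendsto (X ω)).mul tendsto_const_nhds
    have hlim : ∫ ω, X ω * g (Y ω) ∂μ = ∫ ω, X ω * c ω ∂μ :=
      tendsto_nhds_unique tendL (tendR.congr fun n => (step1 n).symm)
    -- step 3 : ∫ X·c = ∫ E[X|G]·c
    have hXc_int : Integrable (fun ω => c ω * X ω) μ :=
      hX.bdd_mul hc_asm (by simpa [Real.norm_eq_abs] using hc_bdd)
    have e3 : ∫ ω, X ω * c ω ∂μ = ∫ ω, (μ[X|mG]) ω * c ω ∂μ := by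
      calc ∫ ω, X ω * c ω ∂μ = ∫ ω, c ω * X ω ∂μ := by simp_rw [mul_comm]
        _ = ∫ ω, c ω * (μ[X|mG]) ω ∂μ := integral_mul_condexp_aux μ hGle hc_meas hX hXc_int
        _ = ∫ ω, (μ[X|mG]) ω * c ω ∂μ := by simp_rw [mul_comm]
    -- step 4 : ∫ E[X|G]·g(Y) = ∫ E[X|G]·c
    have hEXgY_int : Integrable (fun ω => (μ[X|mG]) ω * g (Y ω)) μ :=
      (integrable_condExp.bdd_mul (c := 1) ((hg.comp hY).aestronglyMeasurable)
        (Eventually.of_forall fun ω => by simpa [Real.norm_eq_abs] using hg1 (Y ω))).congr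
        (Eventually.of_forall fun ω => mul_comm _ _)
    have e4 : ∫ ω, (μ[X|mG]) ω * g (Y ω) ∂μ = ∫ ω, (μ[X|mG]) ω * c ω ∂μ :=
      integral_mul_condexp_aux μ hGle stronglyMeasurable_condExp hgY_int hEXgY_int
    rw [hlim, e3, ← e4]
  -- conclusion via uniqueness of the conditional expectation
  have hintc : Integrable (μ[X|mG]) μ := integrable_condExp
  refine (ae_eq_condExp_of_forall_setIntegral_eq hYle hX
    (fun s _ _ => integrableOn_aux hintc s) ?_ ?_).symm
  · intro s hs _
    obtain ⟨B, hB, rfl⟩ := hs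
    have hgB : Measurable (B.indicator (fun _ => (1 : ℝ))) := measurable_const.indicator hB
    have hgB1 : ∀ t, |B.indicator (fun _ => (1 : ℝ)) t| ≤ 1 := fun t => by
      by_cases h : t ∈ B <;> simp [Set.indicator_apply, h]
    have hkey := key _ hgB hgB1
    have hsm : MeasurableSet[mΩ] (Y ⁻¹' B) := hY hB
    calc ∫ ω in Y ⁻¹' B, (μ[X|mG]) ω ∂μ
        = ∫ ω, (μ[X|mG]) ω * B.indicator (fun _ => (1 : ℝ)) (Y ω) ∂μ :=
          setIntegral_mul_indicator_aux μ _ Y hB hY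
      _ = ∫ ω, X ω * B.indicator (fun _ => (1 : ℝ)) (Y ω) ∂μ := hkey.symm
      _ = ∫ ω in Y ⁻¹' B, X ω ∂μ := (setIntegral_mul_indicator_aux μ X Y hB hY).symm
  · exact (StronglyMeasurable.mono stronglyMeasurable_condExp hGY).aestronglyMeasurable
end
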